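/- arXiv:1912.04834 — 4 statements merged into one kernel-verified Lean document; each statement's English description precedes it below -/
import Mathlib

section
/- Let λ be a Young diagram and for each integer i let v_i denote the number of boxes of λ (rotated 45°) in the i-th diagonal column, i.e. v_i is the number of boxes of λ with content i (normalized so the corner box has content 0). Then v_0 + Σ_{i∈ℤ} v_i·v_{i+1} = Σ_{i∈ℤ} v_i², i.e. the dimension 2(v_0 + Σ_i v_i v_{i+1} − Σ_i v_i²) of the associated A_∞ Nakajima quiver variety X_λ is zero. -/
lemma key_sq : ∀ (N : ℕ) (w : ℕ → ℕ), (∀ n, w (n+1) ≤ w n) → (∀ n, w n ≤ w (n+1) + 1) →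
    w N = 0 →
    2 * ∑ n ∈ Finset.range N, w n * w n
      = 2 * ∑ n ∈ Finset.range N, w n * w (n+1) + w 0 * w 0 + w 0 := by
  intro N
  induction N with
  | zero => intro w _ _ h0; simp [h0]
  | succ N ih =>
    intro w h1 h2 hN
    have H := ih (fun n => w (n+1)) (fun n => h1 (n+1)) (fun n => h2 (n+1)) hN
    rw [Finset.sum_range_succ' (fun n => w n * w n),
      Finset.sum_range_succ' (fun n => w n * w (n+1))]
    simp only [Nat.zero_add]
    have hw : w 1 ≤ w 0 := h1 0
    have hw2 : w 0 ≤ w 1 + 1 := h2 0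
    have hcase : w 0 = w 1 ∨ w 0 = w 1 + 1 := by omega
    rcases hcase with h | h <;> rw [h] <;> nlinarith [H]

/-- The A-infinity Nakajima quiver variety `X_λ` attached to a Young diagram `λ`
is zero dimensional: `v₀ + Σᵢ vᵢ v_{i+1} = Σᵢ vᵢ²`, where `vᵢ` is the number of
boxes of `λ` of content `i`. Rows of `λ` are 0-indexed: box `(j, i)` (row `j`,
column `i`, both 0-indexed) belongs to `λ` iff `i < lam j`, and has content `i - j`. -/
theorem stmt_0 (lam : ℕ → ℕ) (hanti : Antitone lam) (hfin : ∃ N, lam N = 0)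
    (v : ℤ → ℕ)
    (hv : ∀ c : ℤ, v c = Nat.card {j : ℕ | 0 ≤ c + (j : ℤ) ∧ c + (j : ℤ) < (lam j : ℤ)}) :
    v 0 + ∑ᶠ i : ℤ, v i * v (i + 1) = ∑ᶠ i : ℤ, v i * v i := by
  obtain ⟨N0, hN0⟩ := hfin
  have hlam0 : ∀ j, N0 ≤ j → lam j = 0 := fun j hj => Nat.le_zero.mp (hN0 ▸ hanti hj)
  -- v as a finset card
  have hvcard : ∀ c : ℤ, v c =
      ((Finset.range N0).filter (fun j : ℕ => 0 ≤ c + (j:ℤ) ∧ c + (j:ℤ) < (lam j : ℤ))).card := by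
    intro c
    rw [hv c]
    have hset : {j : ℕ | 0 ≤ c + (j:ℤ) ∧ c + (j:ℤ) < (lam j:ℤ)}
        = ↑((Finset.range N0).filter (fun j : ℕ => 0 ≤ c + (j:ℤ) ∧ c + (j:ℤ) < (lam j : ℤ))) := by
      ext j
      simp only [Set.mem_setOf_eq, Finset.coe_filter, Finset.mem_range]
      constructor
      · rintro ⟨hj1, hj2⟩
        refine ⟨?_, hj1, hj2⟩
        by_contra hlt
        have h0 : lam j = 0 := hlam0 j (by omega)
        omega
      · rintro ⟨_, hj1, hj2⟩; exact ⟨hj1, hj2⟩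
    rw [hset, Nat.card_coe_set_eq, Set.ncard_coe_finset]
  -- (a) for c ≥ 0, v (c+1) ≤ v c
  have ha : ∀ c : ℤ, 0 ≤ c → v (c + 1) ≤ v c := by
    intro c hc
    rw [hvcard, hvcard]
    apply Finset.card_le_card
    intro j hj
    simp only [Finset.mem_filter, Finset.mem_range] at hj ⊢
    omega
  -- (b) for all c, v c ≤ v (c+1) + 1
  have hb : ∀ c : ℤ, v c ≤ v (c + 1) + 1 := by
    intro c
    rw [hvcard, hvcard]
    have hsub : ((Finset.range N0).filter (fun j : ℕ => 0 ≤ c + (j:ℤ) ∧ c + (j:ℤ) < (lam j : ℤ)))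
        ⊆ insert 0 (((Finset.range N0).filter
            (fun j : ℕ => 0 ≤ c + 1 + (j:ℤ) ∧ c + 1 + (j:ℤ) < (lam j : ℤ))).image (· + 1)) := by
      intro j hj
      simp only [Finset.mem_filter, Finset.mem_range] at hj
      rcases Nat.eq_zero_or_pos j with h0 | hpos
      · subst h0; exact Finset.mem_insert_self _ _
      · apply Finset.mem_insert_of_mem
        rw [Finset.mem_image]
        refine ⟨j - 1, ?_, by omega⟩
        simp only [Finset.mem_filter, Finset.mem_range]
        have hmono : lam j ≤ lam (j - 1) := hanti (Nat.sub_le j 1)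
        omega
    calc ((Finset.range N0).filter
          (fun j : ℕ => 0 ≤ c + (j:ℤ) ∧ c + (j:ℤ) < (lam j : ℤ))).card
        ≤ (insert 0 (((Finset.range N0).filter
            (fun j : ℕ => 0 ≤ c + 1 + (j:ℤ) ∧ c + 1 + (j:ℤ) < (lam j : ℤ))).image (· + 1))).card :=
          Finset.card_le_card hsub
      _ ≤ (((Finset.range N0).filter
            (fun j : ℕ => 0 ≤ c + 1 + (j:ℤ) ∧ c + 1 + (j:ℤ) < (lam j : ℤ))).image (· + 1)).card + 1 :=
          Finset.card_insert_le _ _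
      _ ≤ ((Finset.range N0).filter
            (fun j : ℕ => 0 ≤ c + 1 + (j:ℤ) ∧ c + 1 + (j:ℤ) < (lam j : ℤ))).card + 1 :=
          Nat.add_le_add_right (Finset.card_image_le) 1
  -- (c) for c < 0, v c ≤ v (c+1)
  have hc : ∀ c : ℤ, c < 0 → v c ≤ v (c + 1) := by
    intro c hcneg
    rw [hvcard, hvcard]
    apply Finset.card_le_card_of_injOn (fun j => j - 1)
    · intro j hj
      simp only [Finset.mem_filter, Finset.mem_range, Finset.mem_coe] at hj ⊢
      have hmono : lam j ≤ lam (j - 1) := hanti (Nat.sub_le j 1)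
      omega
    · intro j hj k hk hjk
      simp only [Finset.mem_filter, Finset.mem_range, Finset.mem_coe] at hj hk
      simp only at hjk
      omega
  -- (d) for c < 0, v (c+1) ≤ v c + 1
  have hd : ∀ c : ℤ, c < 0 → v (c + 1) ≤ v c + 1 := by
    intro c hcneg
    rw [hvcard, hvcard]
    have hsub : ((Finset.range N0).filter
          (fun j : ℕ => 0 ≤ c + 1 + (j:ℤ) ∧ c + 1 + (j:ℤ) < (lam j : ℤ)))
        ⊆ insert (-(c+1)).toNat
          ((Finset.range N0).filter (fun j : ℕ => 0 ≤ c + (j:ℤ) ∧ c + (j:ℤ) < (lam j : ℤ))) := by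
      intro j hj
      simp only [Finset.mem_filter, Finset.mem_range] at hj
      rcases eq_or_ne (j : ℤ) (-(c+1)) with h0 | hne
      · have : j = (-(c+1)).toNat := by omega
        rw [this]; exact Finset.mem_insert_self _ _
      · apply Finset.mem_insert_of_mem
        simp only [Finset.mem_filter, Finset.mem_range]
        omega
    calc ((Finset.range N0).filter
          (fun j : ℕ => 0 ≤ c + 1 + (j:ℤ) ∧ c + 1 + (j:ℤ) < (lam j : ℤ))).card
        ≤ (insert (-(c+1)).toNat ((Finset.range N0).filter
            (fun j : ℕ => 0 ≤ c + (j:ℤ) ∧ c + (j:ℤ) < (lam j : ℤ)))).card :=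
          Finset.card_le_card hsub
      _ ≤ ((Finset.range N0).filter
            (fun j : ℕ => 0 ≤ c + (j:ℤ) ∧ c + (j:ℤ) < (lam j : ℤ))).card + 1 :=
          Finset.card_insert_le _ _
  -- (e) vanishing on the right
  have he : ∀ c : ℤ, (lam 0 : ℤ) ≤ c → v c = 0 := by
    intro c hcge
    rw [hvcard]
    rw [Finset.card_eq_zero]
    apply Finset.filter_false_of_mem
    intro j hj
    have hmono : lam j ≤ lam 0 := hanti (Nat.zero_le j)
    omega
  -- (f) vanishing on the left
  have hf : ∀ c : ℤ, c ≤ -(N0 : ℤ) → v c = 0 := by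
    intro c hcle
    rw [hvcard]
    rw [Finset.card_eq_zero]
    apply Finset.filter_false_of_mem
    intro j hj
    simp only [Finset.mem_range] at hj
    omega
  -- the enclosing finset for the finsums
  set M : ℕ := N0 + (lam 0 + 1) with hM
  set s : Finset ℤ := (Finset.range M).image (fun n : ℕ => (n : ℤ) - N0) with hs
  have hsupp : ∀ x : ℤ, v x ≠ 0 → x ∈ s := by
    intro x hx
    have h1 : x < (lam 0 : ℤ) := by
      by_contra h; exact hx (he x (by omega))
    have h2 : -(N0:ℤ) < x := by
      by_contra h; exact hx (hf x (by omega))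
    rw [hs, Finset.mem_image]
    refine ⟨(x + N0).toNat, Finset.mem_range.mpr (by omega), by omega⟩
  have hinj : Set.InjOn (fun n : ℕ => (n : ℤ) - N0) ↑(Finset.range M) := by
    intro a _ b _ hab
    simp only at hab
    omega
  have hsum1 : ∑ᶠ i : ℤ, v i * v (i + 1)
      = ∑ n ∈ Finset.range M, v ((n:ℤ) - N0) * v ((n:ℤ) - N0 + 1) := by
    rw [finsum_eq_sum_of_support_subset _ (s := s) ?_, hs, Finset.sum_image hinj]
    intro x hx
    have hne : v x * v (x + 1) ≠ 0 := hx
    exact hsupp x fun h => hne (by rw [h, Nat.zero_mul])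
  have hsum2 : ∑ᶠ i : ℤ, v i * v i
      = ∑ n ∈ Finset.range M, v ((n:ℤ) - N0) * v ((n:ℤ) - N0) := by
    rw [finsum_eq_sum_of_support_subset _ (s := s) ?_, hs, Finset.sum_image hinj]
    intro x hx
    have hne : v x * v x ≠ 0 := hx
    exact hsupp x fun h => hne (by rw [h, Nat.zero_mul])
  -- the two halves
  set G : ℕ → ℕ := fun n => v (n : ℤ) with hG
  set H : ℕ → ℕ := fun n => v (-(n : ℤ)) with hHdef
  have keyG := key_sq (lam 0) G (fun n => by
      simpa [hG] using ha (n : ℤ) (by positivity))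
    (fun n => by simpa [hG] using hb (n : ℤ))
    (by simpa [hG] using he (lam 0 : ℤ) le_rfl)
  have keyH := key_sq N0 H (fun n => by
      have := hc (-(n:ℤ) - 1) (by omega)
      simpa [hHdef, show -(n:ℤ) - 1 + 1 = -(n:ℤ) by ring, show (-(↑n + 1) : ℤ) = -(n:ℤ) - 1 by push_cast; ring] using this)
    (fun n => by
      have := hd (-(n:ℤ) - 1) (by omega)
      simpa [hHdef, show -(n:ℤ) - 1 + 1 = -(n:ℤ) by ring, show (-(↑n + 1) : ℤ) = -(n:ℤ) - 1 by push_cast; ring] using this)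
    (by simpa [hHdef] using hf (-(N0:ℤ)) le_rfl)
  -- split the big sums
  have split2 : ∑ n ∈ Finset.range M, v ((n:ℤ) - N0) * v ((n:ℤ) - N0) + v 0 * v 0
      = ∑ n ∈ Finset.range N0, H n * H n + ∑ n ∈ Finset.range (lam 0), G n * G n := by
    rw [← Finset.sum_range_add_sum_Ico _ (show N0 ≤ M by omega)]
    have e1 : ∑ n ∈ Finset.Ico N0 M, v ((n:ℤ) - N0) * v ((n:ℤ) - N0)
        = ∑ n ∈ Finset.range (lam 0 + 1), G n * G n := by
      rw [Finset.sum_Ico_eq_sum_range]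
      apply Finset.sum_congr (by rw [hM]; congr 1; omega)
      intro n _
      have : ((N0 + n : ℕ) : ℤ) - N0 = (n : ℤ) := by push_cast; ring
      rw [this]
    have e2 : ∑ n ∈ Finset.range (lam 0 + 1), G n * G n
        = ∑ n ∈ Finset.range (lam 0), G n * G n := by
      rw [Finset.sum_range_succ]
      have : G (lam 0) = 0 := by simpa [hG] using he (lam 0 : ℤ) le_rfl
      rw [this]; ring
    have e3 : ∑ n ∈ Finset.range N0, v ((n:ℤ) - N0) * v ((n:ℤ) - N0)
        = ∑ n ∈ Finset.range N0, H (n + 1) * H (n + 1) := by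
      rw [← Finset.sum_range_reflect (fun n => H (n + 1) * H (n + 1)) N0]
      apply Finset.sum_congr rfl
      intro n hn
      simp only [Finset.mem_range] at hn
      have : ((n:ℤ) - N0) = -(((N0 - 1 - n) + 1 : ℕ) : ℤ) := by
        push_cast [Nat.sub_sub]; omega
      rw [hHdef]
      simp only
      rw [this]
    have e4 : ∑ n ∈ Finset.range N0, H (n + 1) * H (n + 1) + H 0 * H 0
        = ∑ n ∈ Finset.range N0, H n * H n := by
      have hA := Finset.sum_range_succ' (fun n => H n * H n) N0
      have hB := Finset.sum_range_succ (fun n => H n * H n) N0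
      have hHN0 : H N0 = 0 := by simpa [hHdef] using hf (-(N0:ℤ)) le_rfl
      rw [hHN0] at hB
      omega
    have hH0 : H 0 = v 0 := by simp [hHdef]
    rw [e1, e2, e3]
    rw [← hH0]
    omega
  have split1 : ∑ n ∈ Finset.range M, v ((n:ℤ) - N0) * v ((n:ℤ) - N0 + 1)
      = ∑ n ∈ Finset.range N0, H n * H (n + 1) + ∑ n ∈ Finset.range (lam 0), G n * G (n + 1) := by
    rw [← Finset.sum_range_add_sum_Ico _ (show N0 ≤ M by omega)]
    have e1 : ∑ n ∈ Finset.Ico N0 M, v ((n:ℤ) - N0) * v ((n:ℤ) - N0 + 1)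
        = ∑ n ∈ Finset.range (lam 0 + 1), G n * G (n + 1) := by
      rw [Finset.sum_Ico_eq_sum_range]
      apply Finset.sum_congr (by rw [hM]; congr 1; omega)
      intro n _
      have h1 : ((N0 + n : ℕ) : ℤ) - N0 = (n : ℤ) := by push_cast; ring
      have h2 : ((n : ℕ) : ℤ) + 1 = ((n + 1 : ℕ) : ℤ) := by push_cast; ring
      rw [hG]
      simp only
      rw [h1, h2]
    have e2 : ∑ n ∈ Finset.range (lam 0 + 1), G n * G (n + 1)
        = ∑ n ∈ Finset.range (lam 0), G n * G (n + 1) := by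
      rw [Finset.sum_range_succ]
      have : G (lam 0) = 0 := by simpa [hG] using he (lam 0 : ℤ) le_rfl
      rw [this]; ring
    have e3 : ∑ n ∈ Finset.range N0, v ((n:ℤ) - N0) * v ((n:ℤ) - N0 + 1)
        = ∑ n ∈ Finset.range N0, H (n + 1) * H n := by
      rw [← Finset.sum_range_reflect (fun n => H (n + 1) * H n) N0]
      apply Finset.sum_congr rfl
      intro n hn
      simp only [Finset.mem_range] at hn
      have ha1 : ((n:ℤ) - N0) = -(((N0 - 1 - n) + 1 : ℕ) : ℤ) := by
        push_cast [Nat.sub_sub]; omega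
      have ha2 : ((n:ℤ) - N0 + 1) = -(((N0 - 1 - n) : ℕ) : ℤ) := by
        push_cast [Nat.sub_sub]; omega
      rw [hHdef]
      simp only
      rw [ha2, ha1]
    have e4 : ∑ n ∈ Finset.range N0, H (n + 1) * H n = ∑ n ∈ Finset.range N0, H n * H (n + 1) := by
      apply Finset.sum_congr rfl; intro n _; ring
    rw [e1, e2, e3, e4]
  -- finish
  rw [hsum1, hsum2]
  have hG0 : G 0 = v 0 := by simp [hG]
  have hH0 : H 0 = v 0 := by simp [hHdef]
  rw [hG0] at keyG
  rw [hH0] at keyH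
  omega
end

section
/- For complex numbers q, ħ, z with |q| < 1 and |z| < 1, the q-binomial series satisfies Σ_{d=0}^∞ ((ħ;q)_d/(q;q)_d) z^d = Π_{n=0}^∞ (1 − zħq^n)/(1 − zq^n), where (x;q)_d = Π_{k=0}^{d−1}(1 − xq^k). -/
open Finset

noncomputable def qbC (q hbar : ℂ) (d : ℕ) : ℂ :=
  (∏ k ∈ Finset.range d, (1 - hbar * q ^ k)) / (∏ k ∈ Finset.range d, (1 - q * q ^ k))

lemma one_sub_ne {w : ℂ} (hw : ‖w‖ < 1) : (1 : ℂ) - w ≠ 0 := by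
  intro h
  rw [sub_eq_zero] at h
  rw [← h] at hw
  simp at hw

lemma qfac_small {q : ℂ} (hq : ‖q‖ < 1) (k : ℕ) : ‖q * q ^ k‖ < 1 := by
  rw [norm_mul, norm_pow]
  calc ‖q‖ * ‖q‖ ^ k ≤ ‖q‖ :=
        mul_le_of_le_one_right (norm_nonneg q) (pow_le_one₀ (norm_nonneg q) hq.le)
    _ < 1 := hq

lemma den_ne {q : ℂ} (hq : ‖q‖ < 1) (d : ℕ) :
    (∏ k ∈ Finset.range d, (1 - q * q ^ k)) ≠ 0 := by
  apply Finset.prod_ne_zero_iff.mpr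
  intro k _
  exact one_sub_ne (qfac_small hq k)

-- recurrence
lemma qbC_rec (q hbar : ℂ) (hq : ‖q‖ < 1) (d : ℕ) :
    qbC q hbar (d+1) * (1 - q * q ^ d) = qbC q hbar d * (1 - hbar * q ^ d) := by
  unfold qbC
  rw [Finset.prod_range_succ, Finset.prod_range_succ]
  have h1 := den_ne hq d
  have h2 := one_sub_ne (qfac_small hq d)
  rw [div_mul_eq_mul_div, div_mul_eq_mul_div, div_eq_div_iff (mul_ne_zero h1 h2) h1]
  ring
open Finset Real

lemma exp_le_one_sub {x r : ℝ} (hx : 0 ≤ x) (hxr : x ≤ r) (hr : r < 1) :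
    Real.exp (-(x/(1-r))) ≤ 1 - x := by
  have hr1 : (0:ℝ) < 1 - r := by linarith
  have hx1 : (0:ℝ) < 1 - x := by linarith
  have h1 : 1 / (1-x) ≤ Real.exp (x/(1-r)) := by
    calc 1/(1-x) = x/(1-x) + 1 := by field_simp; ring
      _ ≤ x/(1-r) + 1 := by
          gcongr
      _ ≤ Real.exp (x/(1-r)) := by
          have := Real.add_one_le_exp (x/(1-r)); linarith
  rw [Real.exp_neg]
  rw [inv_le_comm₀ (Real.exp_pos _) hx1]
  rw [inv_eq_one_div]
  exact h1

lemma geom_partial_le {r : ℝ} (h0 : 0 ≤ r) (h1 : r < 1) (d : ℕ) :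
    ∑ k ∈ Finset.range d, r ^ k ≤ (1 - r)⁻¹ := by
  rw [← tsum_geometric_of_lt_one h0 h1]
  exact Summable.sum_le_tsum _ (fun k _ => pow_nonneg h0 k) (summable_geometric_of_lt_one h0 h1)

lemma num_bound (q hbar : ℂ) (hq : ‖q‖ < 1) (d : ℕ) :
    ‖∏ k ∈ Finset.range d, (1 - hbar * q ^ k)‖ ≤ Real.exp (‖hbar‖ * (1-‖q‖)⁻¹) := by
  rw [norm_prod]
  calc ∏ k ∈ Finset.range d, ‖1 - hbar * q ^ k‖
      ≤ ∏ k ∈ Finset.range d, Real.exp (‖hbar‖ * ‖q‖ ^ k) := by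
        apply Finset.prod_le_prod (fun k _ => norm_nonneg _)
        intro k _
        calc ‖1 - hbar * q ^ k‖ ≤ ‖(1:ℂ)‖ + ‖hbar * q ^ k‖ := norm_sub_le _ _
          _ = 1 + ‖hbar‖ * ‖q‖ ^ k := by rw [norm_one, norm_mul, norm_pow]
          _ ≤ Real.exp (‖hbar‖ * ‖q‖ ^ k) := by
              have := Real.add_one_le_exp (‖hbar‖ * ‖q‖ ^ k); linarith
    _ = Real.exp (∑ k ∈ Finset.range d, ‖hbar‖ * ‖q‖ ^ k) := by rw [Real.exp_sum]
    _ ≤ Real.exp (‖hbar‖ * (1-‖q‖)⁻¹) := by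
        apply Real.exp_le_exp.mpr
        rw [← Finset.mul_sum]
        exact mul_le_mul_of_nonneg_left (geom_partial_le (norm_nonneg q) hq d) (norm_nonneg _)

lemma den_bound (q : ℂ) (hq : ‖q‖ < 1) (d : ℕ) :
    Real.exp (-(‖q‖ * (1-‖q‖)⁻¹ * (1-‖q‖)⁻¹)) ≤ ‖∏ k ∈ Finset.range d, (1 - q * q ^ k)‖ := by
  have h1q : (0:ℝ) < 1 - ‖q‖ := by linarith
  rw [norm_prod]
  calc Real.exp (-(‖q‖ * (1-‖q‖)⁻¹ * (1-‖q‖)⁻¹))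
      ≤ Real.exp (-(∑ k ∈ Finset.range d, (‖q‖ * ‖q‖ ^ k)/(1-‖q‖))) := by
        apply Real.exp_le_exp.mpr
        rw [neg_le_neg_iff]
        have : ∑ k ∈ Finset.range d, (‖q‖ * ‖q‖ ^ k)/(1-‖q‖)
            = ‖q‖ * (1-‖q‖)⁻¹ * ∑ k ∈ Finset.range d, ‖q‖ ^ k := by
          rw [Finset.mul_sum]
          apply Finset.sum_congr rfl
          intro k _
          rw [div_eq_mul_inv]
          ring
        rw [this]
        apply mul_le_mul_of_nonneg_left (geom_partial_le (norm_nonneg q) hq d)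
        have : (0:ℝ) ≤ (1-‖q‖)⁻¹ := by positivity
        positivity
    _ = ∏ k ∈ Finset.range d, Real.exp (-((‖q‖ * ‖q‖ ^ k)/(1-‖q‖))) := by
        rw [← Real.exp_sum]
        congr 1
        rw [← Finset.sum_neg_distrib]
    _ ≤ ∏ k ∈ Finset.range d, ‖1 - q * q ^ k‖ := by
        apply Finset.prod_le_prod (fun k _ => (Real.exp_pos _).le)
        intro k _
        have hle : ‖q‖ * ‖q‖ ^ k ≤ ‖q‖ :=
          mul_le_of_le_one_right (norm_nonneg q) (pow_le_one₀ (norm_nonneg q) hq.le)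
        calc Real.exp (-((‖q‖ * ‖q‖ ^ k)/(1-‖q‖)))
            ≤ 1 - ‖q‖ * ‖q‖ ^ k := exp_le_one_sub (by positivity) hle hq
          _ ≤ ‖1 - q * q ^ k‖ := by
              have := norm_sub_norm_le (1:ℂ) (q * q ^ k)
              rw [norm_one, norm_mul, norm_pow] at this
              linarith

noncomputable def qbB (q hbar : ℂ) : ℝ :=
  Real.exp (‖hbar‖ * (1-‖q‖)⁻¹) * Real.exp (‖q‖ * (1-‖q‖)⁻¹ * (1-‖q‖)⁻¹)

lemma qbB_pos (q hbar : ℂ) : 0 < qbB q hbar := by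
  unfold qbB; positivity

lemma qbC_bound (q hbar : ℂ) (hq : ‖q‖ < 1) (d : ℕ) :
    ‖qbC q hbar d‖ ≤ qbB q hbar := by
  unfold qbC qbB
  rw [norm_div]
  rw [div_le_iff₀ (by
    have := den_bound q hq d
    have := Real.exp_pos (-(‖q‖ * (1-‖q‖)⁻¹ * (1-‖q‖)⁻¹))
    linarith)]
  calc ‖∏ k ∈ Finset.range d, (1 - hbar * q ^ k)‖
      ≤ Real.exp (‖hbar‖ * (1-‖q‖)⁻¹) := num_bound q hbar hq d
    _ = (Real.exp (‖hbar‖ * (1-‖q‖)⁻¹) * Real.exp (‖q‖ * (1-‖q‖)⁻¹ * (1-‖q‖)⁻¹))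
          * Real.exp (-(‖q‖ * (1-‖q‖)⁻¹ * (1-‖q‖)⁻¹)) := by
        rw [mul_assoc, ← Real.exp_add]
        simp
    _ ≤ (Real.exp (‖hbar‖ * (1-‖q‖)⁻¹) * Real.exp (‖q‖ * (1-‖q‖)⁻¹ * (1-‖q‖)⁻¹))
          * ‖∏ k ∈ Finset.range d, (1 - q * q ^ k)‖ := by
        apply mul_le_mul_of_nonneg_left (den_bound q hq d) (by positivity)

lemma qbC_summable (q hbar : ℂ) (hq : ‖q‖ < 1) {w : ℂ} (hw : ‖w‖ < 1) :
    Summable (fun d => qbC q hbar d * w ^ d) := by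
  apply Summable.of_norm_bounded (g := fun d => qbB q hbar * ‖w‖ ^ d)
  · exact (summable_geometric_of_lt_one (norm_nonneg w) hw).mul_left _
  · intro d
    rw [norm_mul, norm_pow]
    exact mul_le_mul_of_nonneg_right (qbC_bound q hbar hq d) (by positivity)

lemma qb_func_eq (q hbar : ℂ) (hq : ‖q‖ < 1) {w : ℂ} (hw : ‖w‖ < 1) :
    (1 - w) * (∑' d : ℕ, qbC q hbar d * w ^ d)
      = (1 - hbar * w) * (∑' d : ℕ, qbC q hbar d * (q * w) ^ d) := by
  have hqw : ‖q * w‖ < 1 := by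
    rw [norm_mul]
    calc ‖q‖ * ‖w‖ ≤ 1 * ‖w‖ := mul_le_mul_of_nonneg_right hq.le (norm_nonneg w)
      _ = ‖w‖ := one_mul _
      _ < 1 := hw
  have hS := qbC_summable q hbar hq hw
  have hSq := qbC_summable q hbar hq hqw
  have key : (∑' d : ℕ, qbC q hbar d * w ^ d) - (∑' d : ℕ, qbC q hbar d * (q * w) ^ d)
      = w * (∑' d : ℕ, qbC q hbar d * w ^ d)
        - hbar * w * (∑' d : ℕ, qbC q hbar d * (q * w) ^ d) := by
    rw [← Summable.tsum_sub hS hSq, ← tsum_mul_left, ← tsum_mul_left,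
      ← Summable.tsum_sub (hS.mul_left w) (hSq.mul_left (hbar * w))]
    rw [Summable.tsum_eq_zero_add (hS.sub hSq)]
    have h0 : qbC q hbar 0 * w ^ 0 - qbC q hbar 0 * (q * w) ^ 0 = 0 := by ring
    rw [h0, zero_add]
    apply tsum_congr
    intro d
    have hrec := qbC_rec q hbar hq d
    linear_combination (w ^ (d + 1)) * hrec
  linear_combination key

lemma qb_small (q z : ℂ) (hq : ‖q‖ < 1) (hz : ‖z‖ < 1) (n : ℕ) : ‖q ^ n * z‖ < 1 := by
  rw [norm_mul, norm_pow]
  calc ‖q‖ ^ n * ‖z‖ ≤ 1 * ‖z‖ :=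
        mul_le_mul_of_nonneg_right (pow_le_one₀ (norm_nonneg q) hq.le) (norm_nonneg z)
    _ = ‖z‖ := one_mul _
    _ < 1 := hz

lemma qb_step (q hbar z : ℂ) (hq : ‖q‖ < 1) (hz : ‖z‖ < 1) (n : ℕ) :
    (∑' d : ℕ, qbC q hbar d * (q ^ n * z) ^ d)
      = ((1 - z * hbar * q ^ n) / (1 - z * q ^ n))
        * (∑' d : ℕ, qbC q hbar d * (q ^ (n+1) * z) ^ d) := by
  have hsm := qb_small q z hq hz n
  have h := qb_func_eq q hbar hq hsm
  have he : q * (q ^ n * z) = q ^ (n+1) * z := by ring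
  rw [he] at h
  have hne : (1 : ℂ) - q ^ n * z ≠ 0 := one_sub_ne hsm
  have hne' : (1 : ℂ) - z * q ^ n ≠ 0 := by rwa [mul_comm z]
  rw [div_mul_eq_mul_div, eq_div_iff hne']
  linear_combination h

lemma qb_iterate (q hbar z : ℂ) (hq : ‖q‖ < 1) (hz : ‖z‖ < 1) (N : ℕ) :
    (∑' d : ℕ, qbC q hbar d * z ^ d)
      = (∏ n ∈ Finset.range N, (1 - z * hbar * q ^ n) / (1 - z * q ^ n))
        * (∑' d : ℕ, qbC q hbar d * (q ^ N * z) ^ d) := by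
  induction N with
  | zero => simp
  | succ N ih =>
      rw [ih, qb_step q hbar z hq hz N, Finset.prod_range_succ]
      ring

set_option maxHeartbeats 1000000 in
lemma qb_S_sub_one (q hbar : ℂ) (hq : ‖q‖ < 1) {w : ℂ} (hw : ‖w‖ < 1) :
    ‖(∑' d : ℕ, qbC q hbar d * w ^ d) - 1‖ ≤ qbB q hbar * ‖w‖ * (1 - ‖w‖)⁻¹ := by
  have hS := qbC_summable q hbar hq hw
  have hS' : Summable (fun d : ℕ => qbC q hbar (d+1) * w ^ (d+1)) :=
    (summable_nat_add_iff 1).mpr hS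
  have h0 : qbC q hbar 0 * w ^ 0 = 1 := by simp [qbC]
  rw [Summable.tsum_eq_zero_add hS, h0, add_sub_cancel_left]
  calc ‖∑' d : ℕ, qbC q hbar (d+1) * w ^ (d+1)‖
      ≤ ∑' d : ℕ, ‖qbC q hbar (d+1) * w ^ (d+1)‖ := norm_tsum_le_tsum_norm hS'.norm
    _ ≤ ∑' d : ℕ, qbB q hbar * ‖w‖ * ‖w‖ ^ d := by
        apply Summable.tsum_le_tsum _ hS'.norm
          (((summable_geometric_of_lt_one (norm_nonneg w) hw).mul_left _))
        intro d
        rw [norm_mul, norm_pow, pow_succ]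
        calc ‖qbC q hbar (d+1)‖ * (‖w‖ ^ d * ‖w‖)
            ≤ qbB q hbar * (‖w‖ ^ d * ‖w‖) :=
              mul_le_mul_of_nonneg_right (qbC_bound q hbar hq _) (by positivity)
          _ = qbB q hbar * ‖w‖ * ‖w‖ ^ d := by ring
    _ = qbB q hbar * ‖w‖ * (1 - ‖w‖)⁻¹ := by
        rw [tsum_mul_left, tsum_geometric_of_lt_one (norm_nonneg w) hw]

lemma qb_tendsto_one (q hbar z : ℂ) (hq : ‖q‖ < 1) (hz : ‖z‖ < 1) :
    Filter.Tendsto (fun N : ℕ => ∑' d : ℕ, qbC q hbar d * (q ^ N * z) ^ d)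
      Filter.atTop (nhds 1) := by
  have h1z : (0:ℝ) < 1 - ‖z‖ := by linarith
  rw [tendsto_iff_norm_sub_tendsto_zero]
  apply squeeze_zero (fun N => norm_nonneg _)
    (g := fun N => (qbB q hbar * ‖z‖ * (1 - ‖z‖)⁻¹) * ‖q‖ ^ N)
  · intro N
    have hsm := qb_small q z hq hz N
    calc ‖(∑' d : ℕ, qbC q hbar d * (q ^ N * z) ^ d) - 1‖
        ≤ qbB q hbar * ‖q ^ N * z‖ * (1 - ‖q ^ N * z‖)⁻¹ := qb_S_sub_one q hbar hq hsm
      _ ≤ qbB q hbar * ‖q ^ N * z‖ * (1 - ‖z‖)⁻¹ := by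
          apply mul_le_mul_of_nonneg_left _ (mul_nonneg (qbB_pos q hbar).le (norm_nonneg _))
          apply inv_anti₀ h1z
          rw [norm_mul, norm_pow]
          have : ‖q‖ ^ N * ‖z‖ ≤ ‖z‖ :=
            mul_le_of_le_one_left (norm_nonneg z) (pow_le_one₀ (norm_nonneg q) hq.le)
          linarith
      _ ≤ (qbB q hbar * ‖z‖ * (1 - ‖z‖)⁻¹) * ‖q‖ ^ N := by
          rw [norm_mul, norm_pow]
          have hb := (qbB_pos q hbar).le
          have h2 : (0:ℝ) ≤ (1 - ‖z‖)⁻¹ := by positivity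
          nlinarith [pow_nonneg (norm_nonneg q) N, norm_nonneg z]
  · have := tendsto_pow_atTop_nhds_zero_of_lt_one (norm_nonneg q) hq
    simpa using this.const_mul (qbB q hbar * ‖z‖ * (1 - ‖z‖)⁻¹)

lemma qb_tprod_zero {f : ℕ → ℂ} {m : ℕ} (hm : f m = 0) : ∏' n, f n = 0 := by
  have : HasProd f 0 := by
    unfold HasProd
    apply Filter.Tendsto.congr' _ tendsto_const_nhds
    filter_upwards [Filter.eventually_ge_atTop {m}] with s hs
    exact (Finset.prod_eq_zero (hs (Finset.mem_singleton_self m)) hm).symm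
  exact this.tprod_eq

lemma qb_multipliable (q hbar z : ℂ) (hq : ‖q‖ < 1) (hz : ‖z‖ < 1)
    (hnz : ∀ n : ℕ, (1 : ℂ) - z * hbar * q ^ n ≠ 0) :
    Multipliable (fun n : ℕ => (1 - z * hbar * q ^ n) / (1 - z * q ^ n)) := by
  have h1z : (0:ℝ) < 1 - ‖z‖ := by linarith
  set f : ℕ → ℂ := fun n => (1 - z * hbar * q ^ n) / (1 - z * q ^ n) with hf
  have hden : ∀ n : ℕ, (1 : ℂ) - z * q ^ n ≠ 0 := by
    intro n
    apply one_sub_ne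
    rw [mul_comm]
    exact qb_small q z hq hz n
  have hfne : ∀ n, f n ≠ 0 := fun n => div_ne_zero (hnz n) (hden n)
  set K : ℝ := ‖z‖ * ‖1 - hbar‖ * (1 - ‖z‖)⁻¹ with hK
  have hbound : ∀ n : ℕ, ‖f n - 1‖ ≤ K * ‖q‖ ^ n := by
    intro n
    have heq : f n - 1 = z * q ^ n * (1 - hbar) / (1 - z * q ^ n) := by
      simp only [hf]
      rw [div_sub_one (hden n)]
      congr 1
      ring
    rw [heq, norm_div]
    rw [div_le_iff₀ (by
      have := norm_sub_norm_le (1:ℂ) (z * q ^ n)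
      have h2 : ‖z * q ^ n‖ ≤ ‖z‖ := by
        rw [norm_mul, norm_pow]
        exact mul_le_of_le_one_right (norm_nonneg z) (pow_le_one₀ (norm_nonneg q) hq.le)
      rw [norm_one] at this
      linarith)]
    have hd : 1 - ‖z‖ ≤ ‖1 - z * q ^ n‖ := by
      have := norm_sub_norm_le (1:ℂ) (z * q ^ n)
      have h2 : ‖z * q ^ n‖ ≤ ‖z‖ := by
        rw [norm_mul, norm_pow]
        exact mul_le_of_le_one_right (norm_nonneg z) (pow_le_one₀ (norm_nonneg q) hq.le)
      rw [norm_one] at this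
      linarith
    have hcan : (1 - ‖z‖)⁻¹ * (1 - ‖z‖) = 1 := inv_mul_cancel₀ h1z.ne'
    calc ‖z * q ^ n * (1 - hbar)‖ = K * ‖q‖ ^ n * (1 - ‖z‖) := by
          rw [norm_mul, norm_mul, norm_pow, hK]
          linear_combination (-(‖z‖ * ‖1 - hbar‖ * ‖q‖ ^ n)) * hcan
      _ ≤ K * ‖q‖ ^ n * ‖1 - z * q ^ n‖ := by
          apply mul_le_mul_of_nonneg_left hd
          rw [hK]
          positivity
  have htend : Filter.Tendsto (fun n : ℕ => K * ‖q‖ ^ n) Filter.atTop (nhds 0) := by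
    simpa using (tendsto_pow_atTop_nhds_zero_of_lt_one (norm_nonneg q) hq).const_mul K
  have hev : ∀ᶠ n in Filter.atTop, ‖Complex.log (f n)‖ ≤ (3/2) * (K * ‖q‖ ^ n) := by
    filter_upwards [htend.eventually (eventually_le_nhds (by norm_num : (0:ℝ) < 1/2))]
      with n hn
    have h1 : ‖f n - 1‖ ≤ 1/2 := le_trans (hbound n) hn
    have := Complex.norm_log_one_add_half_le_self h1
    rw [add_sub_cancel] at this
    calc ‖Complex.log (f n)‖ ≤ 3/2 * ‖f n - 1‖ := this
      _ ≤ 3/2 * (K * ‖q‖ ^ n) := by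
          apply mul_le_mul_of_nonneg_left (hbound n)
          norm_num
  have hsum : Summable (fun n : ℕ => Complex.log (f n)) := by
    apply Summable.of_norm_bounded_eventually (g := fun n => (3/2) * (K * ‖q‖ ^ n))
    · exact ((summable_geometric_of_lt_one (norm_nonneg q) hq).mul_left K).mul_left _
    · rwa [Nat.cofinite_eq_atTop]
  exact Complex.multipliable_of_summable_log hsum

/-- The q-binomial series: for `|q| < 1` and `|z| < 1`,
`Σ_{d≥0} ((ħ;q)_d / (q;q)_d) z^d = Π_{n≥0} (1 - zħqⁿ)/(1 - zqⁿ)`,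
where `(x;q)_d = Π_{k<d} (1 - x qᵏ)`. -/
theorem stmt_1 (q hbar z : ℂ) (hq : ‖q‖ < 1) (hz : ‖z‖ < 1) :
    ∑' d : ℕ,
      ((∏ k ∈ Finset.range d, (1 - hbar * q ^ k)) /
        (∏ k ∈ Finset.range d, (1 - q * q ^ k))) * z ^ d
      = ∏' n : ℕ, (1 - z * hbar * q ^ n) / (1 - z * q ^ n) := by
  have hLHS : (∑' d : ℕ,
      ((∏ k ∈ Finset.range d, (1 - hbar * q ^ k)) /
        (∏ k ∈ Finset.range d, (1 - q * q ^ k))) * z ^ d)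
      = ∑' d : ℕ, qbC q hbar d * z ^ d := rfl
  rw [hLHS]
  by_cases hzero : ∀ n : ℕ, (1 : ℂ) - z * hbar * q ^ n ≠ 0
  · have hM := qb_multipliable q hbar z hq hz hzero
    have hP := hM.hasProd.tendsto_prod_nat
    have hT := qb_tendsto_one q hbar z hq hz
    have hconst := hP.mul hT
    have heq : (fun N : ℕ =>
        (∏ n ∈ Finset.range N, (1 - z * hbar * q ^ n) / (1 - z * q ^ n))
          * (∑' d : ℕ, qbC q hbar d * (q ^ N * z) ^ d))
        = fun _ : ℕ => ∑' d : ℕ, qbC q hbar d * z ^ d :=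
      funext fun N => (qb_iterate q hbar z hq hz N).symm
    rw [heq] at hconst
    have := tendsto_nhds_unique hconst tendsto_const_nhds
    rw [← this, mul_one]
  · push_neg at hzero
    obtain ⟨m, hm⟩ := hzero
    have hfm : (1 - z * hbar * q ^ m) / (1 - z * q ^ m) = 0 :=
      div_eq_zero_iff.mpr (Or.inl hm)
    rw [qb_tprod_zero hfm, qb_iterate q hbar z hq hz (m+1),
      Finset.prod_eq_zero (Finset.self_mem_range_succ m) hfm, zero_mul]
end

section
/- Let λ be a nonempty Young diagram with content multiplicities v_i (number of boxes of content i), supported on −r ≤ i ≤ s with v_{−r}, v_s > 0. Define τ_λ(i) ∈ {+,−} by: τ_λ(i) = + if (i ≥ 0 and v_i − v_{i+1} = 1) or (i < 0 and v_i − v_{i+1} = 0), and τ_λ(i) = − otherwise. Then the map sending a pair (i₀, i₁) with i₀ < i₁, τ_λ(i₀) = −, τ_λ(i₁) = + to the box of λ in row a and column b, where a = #{i ≥ i₁ : τ_λ(i) = +} and b = #{i ≤ i₀ : τ_λ(i) = −}, is a bijection between the set of such pairs and the set of boxes of λ. In particular #{(i₀,i₁) : i₀ < i₁, τ_λ(i₀)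 = −, τ_λ(i₁) = +} = |λ|. -/
section YoungAux

variable {g : ℕ → ℤ} {N : ℕ} {τ : ℤ → Bool}

private lemma g_step (hg : StrictAnti g) : ∀ d a : ℕ, g (a + d) ≤ g a - d := by
  intro d
  induction d with
  | zero => intro a; simp
  | succ d ih =>
    intro a
    have h1 : g (a + d + 1) < g (a + d) := hg (by omega)
    have h2 := ih a
    have h3 : a + (d + 1) = a + d + 1 := by omega
    rw [h3]
    push_cast
    omega

private lemma g_ge (hg : StrictAnti g) (hgN : ∀ a, N ≤ a → g a = -(a : ℤ)) (a : ℕ) :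
    -(a : ℤ) ≤ g a := by
  rcases le_or_gt N a with h | h
  · rw [hgN a h]
  · have h1 := g_step hg (N - a) a
    have h2 : a + (N - a) = N := by omega
    rw [h2, hgN N le_rfl] at h1
    omega

private noncomputable def Kf (g : ℕ → ℤ) (j : ℤ) : ℕ := sInf {a : ℕ | g a < j}

private lemma Kf_spec (hg : StrictAnti g) (hgN : ∀ a, N ≤ a → g a = -(a : ℤ))
    (j : ℤ) (a : ℕ) : j ≤ g a ↔ a < Kf g j := by
  have hne : {a : ℕ | g a < j}.Nonempty := by
    refine ⟨N + j.natAbs + 1, ?_⟩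
    have h := hgN (N + j.natAbs + 1) (by omega)
    simp only [Set.mem_setOf_eq, h]
    omega
  constructor
  · intro h
    by_contra hc
    push_neg at hc
    have h1 : g (Kf g j) < j := Nat.sInf_mem hne
    have h2 : g a ≤ g (Kf g j) := hg.antitone hc
    omega
  · intro h
    have h1 := Nat.notMem_of_lt_sInf h
    simp only [Set.mem_setOf_eq, not_lt] at h1
    exact h1

private lemma Kf_at (hg : StrictAnti g) (hgN : ∀ a, N ≤ a → g a = -(a : ℤ))
    {a : ℕ} {i : ℤ} (hga : g a = i) : Kf g i = a + 1 := by
  have h1 : a < Kf g i := (Kf_spec hg hgN i a).1 (le_of_eq hga.symm)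
  have h2 : ¬ (a + 1 < Kf g i) := by
    intro hc
    have h3 := (Kf_spec hg hgN i (a + 1)).2 hc
    have h4 : g (a + 1) < g a := hg (by omega)
    omega
  omega

private lemma Kf_at' (hg : StrictAnti g) (hgN : ∀ a, N ≤ a → g a = -(a : ℤ))
    {a : ℕ} {i : ℤ} (hga : g a = i) : Kf g (i + 1) = a := by
  have h1 : ¬ (a < Kf g (i + 1)) := by
    intro hc
    have h2 := (Kf_spec hg hgN (i + 1) a).2 hc
    omega
  rcases Nat.eq_zero_or_pos a with h | h
  · omega
  · have h2 : a - 1 < Kf g (i + 1) := by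
      refine (Kf_spec hg hgN (i + 1) (a - 1)).1 ?_
      have h3 : g a < g (a - 1) := hg (by omega)
      omega
    omega

private lemma Kf_step2 (hg : StrictAnti g) (hgN : ∀ a, N ≤ a → g a = -(a : ℤ))
    {i : ℤ} (h : ∀ a : ℕ, g a ≠ i) : Kf g i = Kf g (i + 1) := by
  by_contra hne
  rcases lt_or_gt_of_ne hne with hc | hc
  · have h1 := (Kf_spec hg hgN (i + 1) (Kf g i)).2 hc
    have h2 : Kf g i < Kf g i := (Kf_spec hg hgN i (Kf g i)).1 (by omega)
    omega
  · have h1 := (Kf_spec hg hgN i (Kf g (i + 1))).2 hc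
    have h2 : ¬ (i + 1 ≤ g (Kf g (i + 1))) := by
      intro hc2
      exact absurd ((Kf_spec hg hgN (i + 1) (Kf g (i + 1))).1 hc2) (lt_irrefl _)
    have h3 := h (Kf g (i + 1))
    omega

private lemma count_true (hg : StrictAnti g)
    (hτ' : ∀ i : ℤ, τ i = true ↔ ∃ a : ℕ, 1 ≤ a ∧ g a = i) {a : ℕ} (h1 : 1 ≤ a) :
    Nat.card {i : ℤ | g a ≤ i ∧ τ i = true} = a := by
  have hset : {i : ℤ | g a ≤ i ∧ τ i = true} = g '' (Set.Icc 1 a) := by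
    ext i
    simp only [Set.mem_setOf_eq, Set.mem_image, Set.mem_Icc, hτ']
    constructor
    · rintro ⟨hge, a', h1', rfl⟩
      exact ⟨a', ⟨h1', hg.le_iff_ge.mp hge⟩, rfl⟩
    · rintro ⟨a', ⟨ha1, ha2⟩, rfl⟩
      exact ⟨hg.antitone ha2, a', ha1, rfl⟩
  rw [hset, Nat.card_coe_set_eq, Set.ncard_image_of_injective _ hg.injective,
    ← Finset.coe_Icc, Set.ncard_coe_finset, Nat.card_Icc]
  omega

private noncomputable def Ffun (τ : ℤ → Bool) (N : ℕ) (j : ℤ) : ℕ :=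
  ((Finset.Icc (1 - (N : ℤ)) j).filter (fun i => τ i = false)).card

private lemma false_lb (hgN : ∀ a, N ≤ a → g a = -(a : ℤ)) (hN1 : 1 ≤ N)
    (hτ' : ∀ i : ℤ, τ i = true ↔ ∃ a : ℕ, 1 ≤ a ∧ g a = i) {i : ℤ} (hi : τ i = false) :
    1 - (N : ℤ) ≤ i := by
  by_contra hc
  push_neg at hc
  have ht : τ i = true :=
    (hτ' i).2 ⟨(-i).toNat, by omega, by rw [hgN _ (by omega)]; omega⟩
  rw [ht] at hi
  exact Bool.noConfusion hi

private lemma count_false_eq (hgN : ∀ a, N ≤ a → g a = -(a : ℤ)) (hN1 : 1 ≤ N)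
    (hτ' : ∀ i : ℤ, τ i = true ↔ ∃ a : ℕ, 1 ≤ a ∧ g a = i) (j : ℤ) :
    Nat.card {i : ℤ | i ≤ j ∧ τ i = false} = Ffun τ N j := by
  have hset : {i : ℤ | i ≤ j ∧ τ i = false}
      = ↑((Finset.Icc (1 - (N : ℤ)) j).filter (fun i => τ i = false)) := by
    ext i
    simp only [Set.mem_setOf_eq, Finset.coe_filter, Finset.mem_Icc]
    constructor
    · rintro ⟨h1, h2⟩
      exact ⟨⟨false_lb hgN hN1 hτ' h2, h1⟩, h2⟩
    · rintro ⟨⟨_, h1⟩, h2⟩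
      exact ⟨h1, h2⟩
  rw [hset, Nat.card_coe_set_eq, Set.ncard_coe_finset]
  rfl

private lemma Ffun_zero (j : ℤ) (hj : j < 1 - (N : ℤ)) : Ffun τ N j = 0 := by
  unfold Ffun
  rw [Finset.Icc_eq_empty (by omega)]
  simp

private lemma Ffun_step (hgN : ∀ a, N ≤ a → g a = -(a : ℤ)) (hN1 : 1 ≤ N)
    (hτ' : ∀ i : ℤ, τ i = true ↔ ∃ a : ℕ, 1 ≤ a ∧ g a = i) (j : ℤ) :
    Ffun τ N j = Ffun τ N (j - 1) + (if τ j = false then 1 else 0) := by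
  rcases lt_or_ge j (1 - (N : ℤ)) with hj | hj
  · rw [Ffun_zero (τ := τ) j hj, Ffun_zero (τ := τ) (j - 1) (by omega)]
    have ht : τ j = true := by
      cases hjt : τ j
      · exact absurd (false_lb hgN hN1 hτ' hjt) (by omega)
      · rfl
    rw [ht]
    simp
  · unfold Ffun
    have hins : Finset.Icc (1 - (N : ℤ)) j = insert j (Finset.Icc (1 - (N : ℤ)) (j - 1)) := by
      ext x
      simp only [Finset.mem_Icc, Finset.mem_insert]
      omega
    rw [hins, Finset.filter_insert]
    by_cases hjt : τ j = false
    · rw [if_pos hjt, if_pos hjt]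
      rw [Finset.card_insert_of_notMem]
      intro hmem
      have h1 := (Finset.mem_filter.mp hmem).1
      rw [Finset.mem_Icc] at h1
      omega
    · rw [if_neg hjt, if_neg hjt]
      omega

private lemma Ffun_mono {j j' : ℤ} (h : j ≤ j') : Ffun τ N j ≤ Ffun τ N j' :=
  Finset.card_le_card (Finset.filter_subset_filter _ (Finset.Icc_subset_Icc_right h))

private lemma Ffun_pos (hgN : ∀ a, N ≤ a → g a = -(a : ℤ)) (hN1 : 1 ≤ N)
    (hτ' : ∀ i : ℤ, τ i = true ↔ ∃ a : ℕ, 1 ≤ a ∧ g a = i) {i : ℤ} (hi : τ i = false) :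
    1 ≤ Ffun τ N i := by
  rw [Ffun_step hgN hN1 hτ' i, if_pos hi]
  omega

private lemma Ffun_strict (hgN : ∀ a, N ≤ a → g a = -(a : ℤ)) (hN1 : 1 ≤ N)
    (hτ' : ∀ i : ℤ, τ i = true ↔ ∃ a : ℕ, 1 ≤ a ∧ g a = i) {i i' : ℤ}
    (h : i < i') (hi' : τ i' = false) : Ffun τ N i < Ffun τ N i' := by
  have h1 : Ffun τ N i ≤ Ffun τ N (i' - 1) := Ffun_mono (by omega)
  rw [Ffun_step hgN hN1 hτ' i', if_pos hi']
  omega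

private lemma Ffun_top (hg : StrictAnti g) (hgN : ∀ a, N ≤ a → g a = -(a : ℤ)) (hN1 : 1 ≤ N)
    (hτ' : ∀ i : ℤ, τ i = true ↔ ∃ a : ℕ, 1 ≤ a ∧ g a = i) {a : ℕ}
    (h1 : 1 ≤ a) (hga : 2 - (N : ℤ) ≤ g a) :
    Ffun τ N (g a - 1) = (g a + a).toNat := by
  have haN : a < N := by
    by_contra hc
    push_neg at hc
    rw [hgN a hc] at hga
    omega
  have hcards := Finset.card_filter_add_card_filter_not
    (s := Finset.Icc (1 - (N : ℤ)) (g a - 1)) (p := fun i => τ i = false)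
  simp only [Bool.not_eq_false] at hcards
  have himg : (Finset.Icc (1 - (N : ℤ)) (g a - 1)).filter (fun i => τ i = true)
      = (Finset.Icc (a + 1) (N - 1)).image g := by
    ext i
    simp only [Finset.mem_filter, Finset.mem_Icc, Finset.mem_image, hτ']
    constructor
    · rintro ⟨⟨hl, hr⟩, a', h1', rfl⟩
      have ha' : a < a' := hg.lt_iff_gt.mp (by omega)
      have ha'' : a' ≤ N - 1 := by
        by_contra hc
        push_neg at hc
        rw [hgN a' (by omega)] at hl
        omega
      exact ⟨a', ⟨by omega, ha''⟩, rfl⟩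
    · rintro ⟨a', ⟨hl, hr⟩, rfl⟩
      refine ⟨⟨?_, ?_⟩, a', by omega, rfl⟩
      · have h2 := g_ge hg hgN a'
        omega
      · have h2 : g a' < g a := hg (by omega)
        omega
  rw [himg, Finset.card_image_of_injective _ hg.injective] at hcards
  have h2 := g_ge hg hgN a
  unfold Ffun
  rw [Int.card_Icc] at hcards
  rw [Nat.card_Icc] at hcards
  omega

private lemma Ffun_exists (hgN : ∀ a, N ≤ a → g a = -(a : ℤ)) (hN1 : 1 ≤ N)
    (hτ' : ∀ i : ℤ, τ i = true ↔ ∃ a : ℕ, 1 ≤ a ∧ g a = i) (b : ℕ) (j₀ : ℤ)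
    (hb : 1 ≤ b) (hbF : b ≤ Ffun τ N j₀) :
    ∃ j : ℤ, j ≤ j₀ ∧ τ j = false ∧ Ffun τ N j = b := by
  have main : ∀ n : ℕ, ∀ b : ℕ, 1 ≤ b → b ≤ Ffun τ N (1 - N + n) →
      ∃ j : ℤ, j ≤ 1 - (N : ℤ) + n ∧ τ j = false ∧ Ffun τ N j = b := by
    intro n
    induction n with
    | zero =>
      intro b hb1 hb2
      simp only [Nat.cast_zero, add_zero] at hb2 ⊢
      have hstep := Ffun_step hgN hN1 hτ' (1 - (N : ℤ))
      have hzero : Ffun τ N (1 - (N : ℤ) - 1) = 0 := Ffun_zero (τ := τ) _ (by omega)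
      by_cases hc : τ (1 - (N : ℤ)) = false
      · refine ⟨1 - (N : ℤ), le_refl _, hc, ?_⟩
        rw [hstep, hzero, if_pos hc]
        rw [hstep, hzero, if_pos hc] at hb2
        omega
      · rw [hstep, hzero, if_neg hc] at hb2
        omega
    | succ n ih =>
      intro b hb1 hb2
      push_cast at hb2 ⊢
      by_cases hc : b ≤ Ffun τ N (1 - N + n)
      · obtain ⟨j, hj1, hj2, hj3⟩ := ih b hb1 hc
        exact ⟨j, by omega, hj2, hj3⟩
      · push_neg at hc
        have hstep := Ffun_step hgN hN1 hτ' (1 - (N : ℤ) + (n + 1))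
        have harg : (1 : ℤ) - N + (n + 1) - 1 = 1 - N + n := by ring
        rw [harg] at hstep
        by_cases ht : τ (1 - (N : ℤ) + (n + 1)) = false
        · refine ⟨1 - (N : ℤ) + (n + 1), le_refl _, ht, ?_⟩
          rw [hstep, if_pos ht]
          rw [hstep, if_pos ht] at hb2
          omega
        · rw [hstep, if_neg ht] at hb2
          omega
  rcases le_or_gt (1 - (N : ℤ)) j₀ with hj | hj
  · have hn : (1 : ℤ) - N + ((j₀ - (1 - N)).toNat) = j₀ := by omega
    obtain ⟨j, hj1, hj2, hj3⟩ := main (j₀ - (1 - N)).toNat b hb (by rw [hn]; exact hbF)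
    rw [hn] at hj1
    exact ⟨j, hj1, hj2, hj3⟩
  · have h0 := Ffun_zero (τ := τ) j₀ hj
    omega

end YoungAux

/-- Let `λ` be a nonempty Young diagram (rows 1-indexed: box `(a,b)` belongs to `λ`
iff `1 ≤ a`, `1 ≤ b ≤ lam a`; its content is `b - a`), with content multiplicities
`vᵢ`. Define `τ_λ(i) = +` (encoded `true`) iff `(i ≥ 0 and vᵢ - v_{i+1} = 1)` or
`(i < 0 and vᵢ = v_{i+1})`, else `τ_λ(i) = -` (encoded `false`). Then the map
`(i₀, i₁) ↦ (a, b)` with `a = #{i ≥ i₁ : τ(i) = +}`, `b = #{i ≤ i₀ : τ(i) = -}`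
is a bijection from `{(i₀,i₁) : i₀ < i₁, τ(i₀) = -, τ(i₁) = +}` onto the set of
boxes of `λ`; in particular the two sets have the same cardinality. -/
theorem stmt_8 (lam : ℕ → ℕ) (hanti : Antitone lam) (hfin : ∃ N, lam N = 0)
    (hne : 1 ≤ lam 1)
    (v : ℤ → ℕ)
    (hv : ∀ c : ℤ, v c = Nat.card
      {p : ℕ × ℕ | 1 ≤ p.1 ∧ 1 ≤ p.2 ∧ p.2 ≤ lam p.1 ∧ (p.2 : ℤ) - (p.1 : ℤ) = c})
    (τ : ℤ → Bool)
    (hτ : ∀ i : ℤ, τ i = true ↔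
      ((0 ≤ i ∧ (v i : ℤ) - (v (i + 1) : ℤ) = 1) ∨ (i < 0 ∧ v i = v (i + 1))))
    (f : ℤ × ℤ → ℕ × ℕ)
    (hf : ∀ p : ℤ × ℤ, f p =
      (Nat.card {i : ℤ | p.2 ≤ i ∧ τ i = true}, Nat.card {i : ℤ | i ≤ p.1 ∧ τ i = false})) :
    Set.BijOn f {p : ℤ × ℤ | p.1 < p.2 ∧ τ p.1 = false ∧ τ p.2 = true}
        {b : ℕ × ℕ | 1 ≤ b.1 ∧ 1 ≤ b.2 ∧ b.2 ≤ lam b.1} ∧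
      Nat.card {p : ℤ × ℤ | p.1 < p.2 ∧ τ p.1 = false ∧ τ p.2 = true}
        = Nat.card {b : ℕ × ℕ | 1 ≤ b.1 ∧ 1 ≤ b.2 ∧ b.2 ≤ lam b.1} := by
  classical
  obtain ⟨N₀, hN₀⟩ := hfin
  set N : ℕ := max N₀ 1 with hNdef
  have hN1 : 1 ≤ N := le_max_right _ _
  have hNzero : ∀ a, N ≤ a → lam a = 0 := by
    intro a ha
    have h1 : lam a ≤ lam N₀ := hanti (le_trans (le_max_left _ _) ha)
    omega
  set g : ℕ → ℤ := fun a => (lam a : ℤ) - a with hgdef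
  have hg : StrictAnti g := by
    intro a b hab
    have h1 : lam b ≤ lam a := hanti hab.le
    simp only [hgdef]
    omega
  have hgN : ∀ a, N ≤ a → g a = -(a : ℤ) := by
    intro a ha
    have h1 := hNzero a ha
    simp only [hgdef, h1]
    omega
  have hfa : ∀ i₀ i₁ : ℤ, f (i₀, i₁) =
      (Nat.card {i : ℤ | i₁ ≤ i ∧ τ i = true}, Nat.card {i : ℤ | i ≤ i₀ ∧ τ i = false}) :=
    fun i₀ i₁ => hf (i₀, i₁)
  -- closed form for v
  have hV : ∀ c : ℤ, v c = Kf g c - max 1 ((1 - c).toNat) := by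
    intro c
    rw [hv c]
    have hset : {p : ℕ × ℕ | 1 ≤ p.1 ∧ 1 ≤ p.2 ∧ p.2 ≤ lam p.1 ∧ (p.2 : ℤ) - (p.1 : ℤ) = c}
        = (fun a : ℕ => (a, ((a : ℤ) + c).toNat)) '' Set.Ico (max 1 ((1 - c).toNat)) (Kf g c) := by
      ext ⟨p1, p2⟩
      simp only [Set.mem_setOf_eq, Set.mem_image, Set.mem_Ico]
      constructor
      · rintro ⟨h1, h2, h3, h4⟩
        refine ⟨p1, ⟨by omega, ?_⟩, ?_⟩
        · refine (Kf_spec hg hgN c p1).1 ?_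
          simp only [hgdef]
          omega
        · simp only [Prod.mk.injEq]
          exact ⟨by trivial, by omega⟩
      · rintro ⟨a, ⟨hL, hK⟩, heq⟩
        have hKa := (Kf_spec hg hgN c a).2 hK
        simp only [hgdef] at hKa
        simp only [Prod.mk.injEq] at heq
        obtain ⟨rfl, rfl⟩ := heq
        refine ⟨by omega, by omega, by omega, by omega⟩
    rw [hset, Nat.card_coe_set_eq,
      Set.ncard_image_of_injective _ (fun x y hxy => congrArg Prod.fst hxy),
      ← Finset.coe_Ico, Set.ncard_coe_finset, Nat.card_Ico]
  have hg0 : (0 : ℤ) ≤ g 0 := by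
    have := g_ge hg hgN 0
    simpa using this
  -- the key characterization of τ
  have hτ' : ∀ i : ℤ, τ i = true ↔ ∃ a : ℕ, 1 ≤ a ∧ g a = i := by
    intro i
    rw [hτ i]
    by_cases hex : ∃ a : ℕ, 1 ≤ a ∧ g a = i
    · obtain ⟨a, ha1, hga⟩ := hex
      have hKi := Kf_at hg hgN hga
      have hKi1 := Kf_at' hg hgN hga
      have hvi := hV i
      have hvi1 := hV (i + 1)
      constructor
      · intro _
        exact ⟨a, ha1, hga⟩
      · intro _
        rcases le_or_gt 0 i with h0 | h0
        · left
          refine ⟨h0, ?_⟩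
          rw [hvi, hvi1, hKi, hKi1]
          omega
        · right
          refine ⟨h0, ?_⟩
          rw [hvi, hvi1, hKi, hKi1]
          omega
    · constructor
      · intro hpred
        exfalso
        have hvi := hV i
        have hvi1 := hV (i + 1)
        by_cases hex0 : ∃ a : ℕ, g a = i
        · obtain ⟨a, hga⟩ := hex0
          have ha0 : a = 0 := by
            by_contra hc
            exact hex ⟨a, by omega, hga⟩
          subst ha0
          have hge0 : (0 : ℤ) ≤ i := hga ▸ hg0
          have hKi := Kf_at hg hgN hga
          have hKi1 := Kf_at' hg hgN hga
          rcases hpred with ⟨h0, heq⟩ | ⟨h0, heq⟩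
          · rw [hvi, hvi1, hKi, hKi1] at heq
            omega
          · omega
        · push_neg at hex0
          have hK2 := Kf_step2 hg hgN hex0
          rcases hpred with ⟨h0, heq⟩ | ⟨h0, heq⟩
          · rw [hvi, hvi1, hK2] at heq
            omega
          · have hlb : ((-i).toNat) < Kf g (i + 1) := by
              refine (Kf_spec hg hgN (i + 1) _).1 ?_
              have hge := g_ge hg hgN ((-i).toNat)
              have hne' := hex0 ((-i).toNat)
              omega
            rw [hvi, hvi1, hK2] at heq
            omega
      · intro hexx
        exact absurd hexx hex
  -- assemble the bijection
  have hbij : Set.BijOn f {p : ℤ × ℤ | p.1 < p.2 ∧ τ p.1 = false ∧ τ p.2 = true}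
      {b : ℕ × ℕ | 1 ≤ b.1 ∧ 1 ≤ b.2 ∧ b.2 ≤ lam b.1} := by
    refine ⟨?_, ?_, ?_⟩
    · -- MapsTo
      rintro ⟨i₀, i₁⟩ ⟨hlt, h0, h1⟩
      obtain ⟨a, ha1, hga⟩ := (hτ' i₁).1 h1
      subst hga
      have hfval : f (i₀, g a) = (a, Ffun τ N i₀) := by
        rw [hfa, count_true hg hτ' ha1, count_false_eq hgN hN1 hτ']
      rw [hfval]
      have hb1 : 1 - (N : ℤ) ≤ i₀ := false_lb hgN hN1 hτ' h0
      have htop := Ffun_top hg hgN hN1 hτ' ha1 (show 2 - (N : ℤ) ≤ g a by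
        simp only [Set.mem_setOf_eq] at hlt
        omega)
      have hmono : Ffun τ N i₀ ≤ Ffun τ N (g a - 1) := Ffun_mono (by
        simp only [Set.mem_setOf_eq] at hlt
        omega)
      have hlam : ((g a + a).toNat) = lam a := by
        simp only [hgdef]
        omega
      show 1 ≤ a ∧ 1 ≤ Ffun τ N i₀ ∧ Ffun τ N i₀ ≤ lam a
      exact ⟨ha1, Ffun_pos hgN hN1 hτ' h0, by omega⟩
    · -- InjOn
      rintro ⟨i₀, i₁⟩ ⟨hlt, h0, h1⟩ ⟨i₀', i₁'⟩ ⟨hlt', h0', h1'⟩ heq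
      obtain ⟨a, ha1, hga⟩ := (hτ' i₁).1 h1
      subst hga
      obtain ⟨a', ha1', hga'⟩ := (hτ' i₁').1 h1'
      subst hga'
      have e1 : f (i₀, g a) = (a, Ffun τ N i₀) := by
        rw [hfa, count_true hg hτ' ha1, count_false_eq hgN hN1 hτ']
      have e2 : f (i₀', g a') = (a', Ffun τ N i₀') := by
        rw [hfa, count_true hg hτ' ha1', count_false_eq hgN hN1 hτ']
      rw [e1, e2] at heq
      have haa : a = a' := congrArg Prod.fst heq
      subst haa
      have hbb : Ffun τ N i₀ = Ffun τ N i₀' := congrArg Prod.snd heq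
      have hi : i₀ = i₀' := by
        by_contra hne2
        rcases lt_or_gt_of_ne hne2 with hlt2 | hlt2
        · have := Ffun_strict hgN hN1 hτ' hlt2 h0'
          omega
        · have := Ffun_strict hgN hN1 hτ' hlt2 h0
          omega
      rw [hi]
    · -- SurjOn
      rintro ⟨a, b⟩ ⟨ha1, hb1, hbl⟩
      replace ha1 : 1 ≤ a := ha1
      replace hb1 : 1 ≤ b := hb1
      replace hbl : b ≤ lam a := hbl
      have hlam1 : 1 ≤ lam a := le_trans hb1 hbl
      have haN : a < N := by
        by_contra hc
        push_neg at hc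
        have := hNzero a hc
        omega
      have h2N : 2 - (N : ℤ) ≤ g a := by
        simp only [hgdef]
        omega
      have htop := Ffun_top hg hgN hN1 hτ' ha1 h2N
      have htop' : Ffun τ N (g a - 1) = lam a := by
        rw [htop]
        simp only [hgdef]
        omega
      obtain ⟨j, hj1, hj2, hj3⟩ := Ffun_exists hgN hN1 hτ' b (g a - 1) hb1 (by omega)
      refine ⟨(j, g a), ⟨by omega, hj2, (hτ' (g a)).2 ⟨a, ha1, rfl⟩⟩, ?_⟩
      rw [hfa, count_true hg hτ' ha1, count_false_eq hgN hN1 hτ', hj3]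
  exact ⟨hbij, Nat.card_congr (hbij.equiv f)⟩
end

section
/- Let λ be a Young diagram, v_i its content multiplicities, and let (λ^{−r}, …, λ^s) be a tuple of partitions that interlace according to the shape of λ (meaning: if τ_λ(i) = + then λ^i ≻ λ^{i+1}, if τ_λ(i) = − then λ^i ≺ λ^{i+1}, and each λ^i has at most v_i parts; here μ ≻ ν means μ_1 ≥ ν_1 ≥ μ_2 ≥ ν_2 ≥ …). Define σ̂_λ(i) = v_{i−1} − v_i + δ_{i,0}. Then Σ_{i=−r}^{s−1} Σ_{j=1}^{v_i} Σ_{k : j <_{τ(i)} k, 1 ≤ k ≤ v_{i+1}} (λ^i_j − λ^{i+1}_k) + Σ_{i=−r}^{s} Σ_{1 ≤ j < k ≤ v_i} (λ^i_k − λ^i_j) = − Σ_{i=−r}^{s} σ̂_λ(i) |λ^i|, where <_− is strict inequality < and <_+ is ≤. -/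
private lemma inner_le (a b : ℕ) (P Q : ℕ → ℤ) (hab : a ≤ b + 1) (hba : b ≤ a) :
    (∑ j ∈ Finset.Icc 1 a, ∑ k ∈ Finset.Icc 1 b, if j ≤ k then P j - Q k else 0)
      = (∑ j ∈ Finset.Icc 1 a, ((b : ℤ) + 1 - (j : ℤ)) * P j)
        - ∑ k ∈ Finset.Icc 1 b, (k : ℤ) * Q k := by
  have h1 : ∀ j k : ℕ, (if j ≤ k then P j - Q k else 0)
      = (if j ≤ k then P j else 0) - (if j ≤ k then Q k else 0) := by
    intro j k; split <;> ring
  simp_rw [h1, Finset.sum_sub_distrib]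
  congr 1
  · refine Finset.sum_congr rfl fun j hj => ?_
    simp only [Finset.mem_Icc] at hj
    rw [← Finset.sum_filter]
    have h2 : (Finset.Icc 1 b).filter (fun k => j ≤ k) = Finset.Icc j b := by
      ext k; simp only [Finset.mem_filter, Finset.mem_Icc]; omega
    rw [h2, Finset.sum_const, Nat.card_Icc, nsmul_eq_mul]
    have h3 : ((b + 1 - j : ℕ) : ℤ) = (b : ℤ) + 1 - (j : ℤ) := by omega
    rw [h3]
  · rw [Finset.sum_comm]
    refine Finset.sum_congr rfl fun k hk => ?_
    simp only [Finset.mem_Icc] at hk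
    rw [← Finset.sum_filter]
    have h2 : (Finset.Icc 1 a).filter (fun j => j ≤ k) = Finset.Icc 1 k := by
      ext j; simp only [Finset.mem_filter, Finset.mem_Icc]; omega
    rw [h2, Finset.sum_const, Nat.card_Icc, nsmul_eq_mul]
    have h3 : ((k + 1 - 1 : ℕ) : ℤ) = (k : ℤ) := by omega
    rw [h3]

private lemma inner_lt (a b : ℕ) (P Q : ℕ → ℤ) (hab : a ≤ b) (hba : b ≤ a + 1) :
    (∑ j ∈ Finset.Icc 1 a, ∑ k ∈ Finset.Icc 1 b, if j < k then P j - Q k else 0)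
      = (∑ j ∈ Finset.Icc 1 a, ((b : ℤ) - (j : ℤ)) * P j)
        - ∑ k ∈ Finset.Icc 1 b, ((k : ℤ) - 1) * Q k := by
  have h1 : ∀ j k : ℕ, (if j < k then P j - Q k else 0)
      = (if j < k then P j else 0) - (if j < k then Q k else 0) := by
    intro j k; split <;> ring
  simp_rw [h1, Finset.sum_sub_distrib]
  congr 1
  · refine Finset.sum_congr rfl fun j hj => ?_
    simp only [Finset.mem_Icc] at hj
    rw [← Finset.sum_filter]
    have h2 : (Finset.Icc 1 b).filter (fun k => j < k) = Finset.Icc (j+1) b := by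
      ext k; simp only [Finset.mem_filter, Finset.mem_Icc]; omega
    rw [h2, Finset.sum_const, Nat.card_Icc, nsmul_eq_mul]
    have h3 : ((b + 1 - (j + 1) : ℕ) : ℤ) = (b : ℤ) - (j : ℤ) := by omega
    rw [h3]
  · rw [Finset.sum_comm]
    refine Finset.sum_congr rfl fun k hk => ?_
    simp only [Finset.mem_Icc] at hk
    rw [← Finset.sum_filter]
    have h2 : (Finset.Icc 1 a).filter (fun j => j < k) = Finset.Icc 1 (k - 1) := by
      ext j; simp only [Finset.mem_filter, Finset.mem_Icc]; omega
    rw [h2, Finset.sum_const, Nat.card_Icc, nsmul_eq_mul]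
    have h3 : ((k - 1 + 1 - 1 : ℕ) : ℤ) = (k : ℤ) - 1 := by omega
    rw [h3]


/-- The key combinatorial lemma in the proof of the main theorem. Let `λ` be a
nonempty Young diagram (rows 1-indexed: box `(a,b)` belongs iff `1 ≤ b ≤ lam a`,
content `b - a`) with content multiplicities `vᵢ`, supported exactly on `-r ≤ i ≤ s`.
Let `τ(i) = +` (true) iff `(i ≥ 0 and vᵢ = v_{i+1} + 1)` or `(i < 0 and vᵢ = v_{i+1})`.
Let `(λ^{-r}, …, λ^s)` (encoded `L i j` = `j`-th part of `λ^i`, `j ≥ 1`) interlace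
according to the shape of `λ`: `τ(i) = + ⟹ λ^i ≻ λ^{i+1}`, `τ(i) = - ⟹ λ^i ≺ λ^{i+1}`,
and `λ^i` has at most `vᵢ` parts. Then
`Σ_{i=-r}^{s-1} Σ_{j=1}^{vᵢ} Σ_{k : j <_{τ(i)} k ≤ v_{i+1}} (λ^i_j - λ^{i+1}_k)
 + Σ_{i=-r}^{s} Σ_{1 ≤ j < k ≤ vᵢ} (λ^i_k - λ^i_j) = - Σ_{i=-r}^{s} σ̂_λ(i) |λ^i|`,
where `σ̂_λ(i) = v_{i-1} - vᵢ + δ_{i,0}`, `<_-` is `<` and `<_+` is `≤`. -/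
theorem stmt_9 (lam : ℕ → ℕ) (hanti : Antitone lam) (hfin : ∃ N, lam N = 0)
    (hne : 1 ≤ lam 1)
    (v : ℤ → ℕ)
    (hv : ∀ c : ℤ, v c = Nat.card
      {p : ℕ × ℕ | 1 ≤ p.1 ∧ 1 ≤ p.2 ∧ p.2 ≤ lam p.1 ∧ (p.2 : ℤ) - (p.1 : ℤ) = c})
    (r s : ℕ)
    (hsupp : ∀ i : ℤ, v i ≠ 0 ↔ (-(r : ℤ) ≤ i ∧ i ≤ (s : ℤ)))
    (τ : ℤ → Bool)
    (hτ : ∀ i : ℤ, τ i = true ↔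
      ((0 ≤ i ∧ (v i : ℤ) = (v (i + 1) : ℤ) + 1) ∨ (i < 0 ∧ v i = v (i + 1))))
    (L : ℤ → ℕ → ℕ)
    (hLdec : ∀ (i : ℤ) (j : ℕ), 1 ≤ j → L i (j + 1) ≤ L i j)
    (hLlen : ∀ (i : ℤ) (j : ℕ), v i < j → L i j = 0)
    (hLint : ∀ i : ℤ, -(r : ℤ) ≤ i → i < (s : ℤ) → ∀ j : ℕ, 1 ≤ j →
      (τ i = true → L (i + 1) j ≤ L i j ∧ L i (j + 1) ≤ L (i + 1) j) ∧
      (τ i = false → L i j ≤ L (i + 1) j ∧ L (i + 1) (j + 1) ≤ L i j)) :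
    (∑ i ∈ Finset.Icc (-(r : ℤ)) ((s : ℤ) - 1), ∑ j ∈ Finset.Icc 1 (v i),
        ∑ k ∈ Finset.Icc 1 (v (i + 1)),
          (if (τ i = true ∧ j ≤ k) ∨ (τ i = false ∧ j < k)
            then (L i j : ℤ) - (L (i + 1) k : ℤ) else 0))
      + (∑ i ∈ Finset.Icc (-(r : ℤ)) (s : ℤ), ∑ j ∈ Finset.Icc 1 (v i),
          ∑ k ∈ Finset.Icc 1 (v i), (if j < k then (L i k : ℤ) - (L i j : ℤ) else 0))
      = - ∑ i ∈ Finset.Icc (-(r : ℤ)) (s : ℤ),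
          ((v (i - 1) : ℤ) - (v i : ℤ) + (if i = 0 then 1 else 0)) *
            ∑ j ∈ Finset.Icc 1 (v i), (L i j : ℤ) := by
  classical
  obtain ⟨N, hN⟩ := hfin
  set F : ℤ → Finset ℕ := fun c =>
    (Finset.Icc 1 N).filter (fun a => 1 ≤ (a : ℤ) + c ∧ (a : ℤ) + c ≤ (lam a : ℤ)) with hF
  have himg : ∀ c : ℤ,
      {p : ℕ × ℕ | 1 ≤ p.1 ∧ 1 ≤ p.2 ∧ p.2 ≤ lam p.1 ∧ (p.2 : ℤ) - (p.1 : ℤ) = c}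
        = (fun a : ℕ => (a, (c + (a : ℤ)).toNat)) '' ↑(F c) := by
    intro c
    ext ⟨p1, p2⟩
    simp only [Set.mem_setOf_eq, Set.mem_image, Finset.mem_coe, hF, Finset.mem_filter,
      Finset.mem_Icc, Prod.mk.injEq]
    constructor
    · rintro ⟨h1, h2, h3, h4⟩
      have hp1N : p1 ≤ N := by
        by_contra hcon
        have : lam p1 ≤ lam N := hanti (by omega)
        omega
      exact ⟨p1, ⟨⟨h1, hp1N⟩, by omega, by omega⟩, rfl, by omega⟩
    · rintro ⟨a, ⟨⟨ha1, haN⟩, hb1, hb2⟩, rfl, rfl⟩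
      refine ⟨ha1, by omega, by omega, by omega⟩
  have hvF : ∀ c : ℤ, v c = (F c).card := by
    intro c
    rw [hv c, himg c, Nat.card_coe_set_eq,
      Set.ncard_image_of_injOn (fun a _ b _ h => congrArg Prod.fst h),
      Set.ncard_coe_finset]
  have M1a : ∀ c : ℤ, 0 ≤ c → v (c + 1) ≤ v c := by
    intro c hc
    rw [hvF, hvF]
    apply Finset.card_le_card
    intro a ha
    simp only [hF, Finset.mem_filter, Finset.mem_Icc] at ha ⊢
    omega
  have M1b : ∀ c : ℤ, 0 ≤ c → v c ≤ v (c + 1) + 1 := by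
    intro c hc
    rw [hvF, hvF]
    rcases Finset.eq_empty_or_nonempty (F c) with h | h
    · simp [h]
    · set m := (F c).max' h with hmd
      have hm : m ∈ F c := Finset.max'_mem (F c) h
      have hsub : (F c).erase m ⊆ F (c + 1) := by
        intro a ha
        have ha' := Finset.mem_of_mem_erase ha
        have hne' := Finset.ne_of_mem_erase ha
        have hle : a ≤ m := hmd ▸ Finset.le_max' _ a ha'
        have hlam : lam m ≤ lam a := hanti (by omega)
        simp only [hF, Finset.mem_filter, Finset.mem_Icc] at ha' hm ⊢
        omega
      calc (F c).card ≤ ((F c).erase m).card + 1 := by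
            rw [Finset.card_erase_of_mem hm]
            omega
        _ ≤ (F (c + 1)).card + 1 := Nat.add_le_add_right (Finset.card_le_card hsub) 1
  have M2a : ∀ c : ℤ, c < 0 → v c ≤ v (c + 1) := by
    intro c hc
    rw [hvF, hvF]
    apply Finset.card_le_card_of_injOn (fun a => a - 1)
    · intro a ha
      show a - 1 ∈ F (c + 1)
      simp only [hF, Finset.mem_coe, Finset.mem_filter, Finset.mem_Icc] at ha ⊢
      have hlam : lam a ≤ lam (a - 1) := hanti (by omega)
      omega
    · intro a ha b hb h
      have h' : a - 1 = b - 1 := h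
      simp only [hF, Finset.coe_filter, Finset.mem_Icc, Set.mem_setOf_eq] at ha hb
      omega
  have M2b : ∀ c : ℤ, c < 0 → v (c + 1) ≤ v c + 1 := by
    intro c hc
    rw [hvF, hvF]
    rcases Finset.eq_empty_or_nonempty (F (c + 1)) with h | h
    · simp [h]
    · set m := (F (c + 1)).min' h with hmd
      have hm : m ∈ F (c + 1) := Finset.min'_mem (F (c + 1)) h
      have hsub : (F (c + 1)).erase m ⊆ F c := by
        intro a ha
        have ha' := Finset.mem_of_mem_erase ha
        have hne' := Finset.ne_of_mem_erase ha
        have hle : m ≤ a := hmd ▸ Finset.min'_le _ a ha'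
        simp only [hF, Finset.mem_filter, Finset.mem_Icc] at ha' hm ⊢
        omega
      calc (F (c + 1)).card ≤ ((F (c + 1)).erase m).card + 1 := by
            rw [Finset.card_erase_of_mem hm]
            omega
        _ ≤ (F c).card + 1 := Nat.add_le_add_right (Finset.card_le_card hsub) 1
  -- boundary values
  have hout_l : v (-(r : ℤ) - 1) = 0 := by
    by_contra h
    have := (hsupp _).mp h
    omega
  have hout_r : v ((s : ℤ) + 1) = 0 := by
    by_contra h
    have := (hsupp _).mp h
    omega
  have hvr : v (-(r : ℤ)) = 1 := by
    have h1 : v (-(r : ℤ)) ≠ 0 := (hsupp _).mpr ⟨le_refl _, by omega⟩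
    have h2 := M2b (-(r : ℤ) - 1) (by omega)
    have h3 : -(r : ℤ) - 1 + 1 = -(r : ℤ) := by ring
    rw [h3] at h2
    omega
  have hvs : v (s : ℤ) = 1 := by
    have h1 : v (s : ℤ) ≠ 0 := (hsupp _).mpr ⟨by omega, le_refl _⟩
    have h2 := M1b (s : ℤ) (by omega)
    omega
  set I : ℤ → ℤ := fun i => if i < 0 then 1 else 0 with hI
  set X : ℤ → ℤ := fun i =>
    ∑ j ∈ Finset.Icc 1 (v i), ((v i : ℤ) + I i - (j : ℤ)) * (L i j : ℤ) with hX
  set Y : ℤ → ℤ := fun i =>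
    ∑ k ∈ Finset.Icc 1 (v i),
      ((k : ℤ) - 1 + I (i - 1) + (v (i - 1) : ℤ) - (v i : ℤ)) * (L i k : ℤ) with hY
  set Z : ℤ → ℤ := fun i =>
    ∑ j ∈ Finset.Icc 1 (v i), (2 * (j : ℤ) - 1 - (v i : ℤ)) * (L i j : ℤ) with hZ
  have hI01 : ∀ i : ℤ, I i = 0 ∨ I i = 1 := by
    intro i; simp only [hI]; split_ifs <;> simp
  have he_t : ∀ i : ℤ, τ i = true → (v i : ℤ) = (v (i + 1) : ℤ) + 1 - I i := by
    intro i h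
    rcases (hτ i).mp h with ⟨h0, hv'⟩ | ⟨h0, hv'⟩
    · simp only [hI, if_neg (by omega : ¬ i < 0)]; omega
    · simp only [hI, if_pos h0]; omega
  have he_f : ∀ i : ℤ, τ i = false → (v i : ℤ) = (v (i + 1) : ℤ) - I i := by
    intro i h
    by_cases h0 : 0 ≤ i
    · have h1 := M1a i h0
      have h2 := M1b i h0
      have h3 : (v i : ℤ) ≠ (v (i + 1) : ℤ) + 1 := by
        intro hh
        rw [(hτ i).mpr (Or.inl ⟨h0, hh⟩)] at h
        exact absurd h (by simp)
      simp only [hI, if_neg (by omega : ¬ i < 0)]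
      omega
    · have h1 := M2a i (by omega)
      have h2 := M2b i (by omega)
      have h3 : v i ≠ v (i + 1) := by
        intro hh
        rw [(hτ i).mpr (Or.inr ⟨by omega, hh⟩)] at h
        exact absurd h (by simp)
      simp only [hI, if_pos (by omega : i < 0)]
      omega
  -- inner cross identity
  have hcross : ∀ i ∈ Finset.Icc (-(r : ℤ)) ((s : ℤ) - 1),
      (∑ j ∈ Finset.Icc 1 (v i), ∑ k ∈ Finset.Icc 1 (v (i + 1)),
        (if (τ i = true ∧ j ≤ k) ∨ (τ i = false ∧ j < k)
          then (L i j : ℤ) - (L (i + 1) k : ℤ) else 0))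
      = X i - Y (i + 1) := by
    intro i _
    have hIi := hI01 i
    cases hτi : τ i with
    | true =>
      have het := he_t i hτi
      simp only [hτi, Bool.true_eq_false, false_and, and_false, or_false, false_or, true_and]
      refine (inner_le (v i) (v (i + 1)) (fun j => (L i j : ℤ)) (fun k => (L (i + 1) k : ℤ))
        (by omega) (by omega)).trans ?_
      simp only [hX, hY, add_sub_cancel_right]
      congr 1
      · refine Finset.sum_congr rfl fun j hj => ?_
        have hc : ((v (i + 1) : ℤ) + 1 - (j : ℤ)) = ((v i : ℤ) + I i - (j : ℤ)) := by omega
        rw [hc]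
      · refine Finset.sum_congr rfl fun k hk => ?_
        have hc : ((k : ℤ)) = ((k : ℤ) - 1 + I i + (v i : ℤ) - (v (i + 1) : ℤ)) := by omega
        rw [← hc]
    | false =>
      have hef := he_f i hτi
      simp only [hτi, Bool.false_eq_true, false_and, and_false, or_false, false_or, true_and]
      refine (inner_lt (v i) (v (i + 1)) (fun j => (L i j : ℤ)) (fun k => (L (i + 1) k : ℤ))
        (by omega) (by omega)).trans ?_
      simp only [hX, hY, add_sub_cancel_right]
      congr 1
      · refine Finset.sum_congr rfl fun j hj => ?_
        have hc : ((v (i + 1) : ℤ) - (j : ℤ)) = ((v i : ℤ) + I i - (j : ℤ)) := by omega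
        rw [hc]
      · refine Finset.sum_congr rfl fun k hk => ?_
        have hc : ((k : ℤ) - 1) = ((k : ℤ) - 1 + I i + (v i : ℤ) - (v (i + 1) : ℤ)) := by omega
        rw [← hc]
  -- same-level identity
  have hsame : ∀ i : ℤ,
      (∑ j ∈ Finset.Icc 1 (v i), ∑ k ∈ Finset.Icc 1 (v i),
        (if j < k then (L i k : ℤ) - (L i j : ℤ) else 0)) = Z i := by
    intro i
    have h1 : ∀ j k : ℕ, (if j < k then (L i k : ℤ) - (L i j : ℤ) else 0)
        = (if j < k then (-(L i j : ℤ)) - (-(L i k : ℤ)) else 0) := by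
      intro j k; split <;> ring
    simp_rw [h1]
    refine (inner_lt (v i) (v i) (fun j => -(L i j : ℤ)) (fun k => -(L i k : ℤ))
      le_rfl (by omega)).trans ?_
    simp only [hZ]
    rw [← Finset.sum_sub_distrib]
    refine Finset.sum_congr rfl fun j hj => ?_
    ring
  have e1 : (∑ i ∈ Finset.Icc (-(r : ℤ)) ((s : ℤ) - 1), ∑ j ∈ Finset.Icc 1 (v i),
        ∑ k ∈ Finset.Icc 1 (v (i + 1)),
          (if (τ i = true ∧ j ≤ k) ∨ (τ i = false ∧ j < k)
            then (L i j : ℤ) - (L (i + 1) k : ℤ) else 0))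
      = ∑ i ∈ Finset.Icc (-(r : ℤ)) ((s : ℤ) - 1), (X i - Y (i + 1)) :=
    Finset.sum_congr rfl hcross
  have e2 : (∑ i ∈ Finset.Icc (-(r : ℤ)) (s : ℤ), ∑ j ∈ Finset.Icc 1 (v i),
        ∑ k ∈ Finset.Icc 1 (v i), (if j < k then (L i k : ℤ) - (L i j : ℤ) else 0))
      = ∑ i ∈ Finset.Icc (-(r : ℤ)) (s : ℤ), Z i :=
    Finset.sum_congr rfl fun i _ => hsame i
  rw [e1, e2, Finset.sum_sub_distrib]
  have hshift : ∑ i ∈ Finset.Icc (-(r : ℤ) + 1) (s : ℤ), Y i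
      = ∑ i ∈ Finset.Icc (-(r : ℤ)) ((s : ℤ) - 1), Y (i + 1) := by
    have h : Finset.Icc (-(r : ℤ) + 1) (s : ℤ)
        = Finset.map (addRightEmbedding 1) (Finset.Icc (-(r : ℤ)) ((s : ℤ) - 1)) := by
      rw [Finset.map_add_right_Icc]
      congr 1
      ring
    rw [h, Finset.sum_map]
    rfl
  have htop : ∑ i ∈ Finset.Icc (-(r : ℤ)) (s : ℤ), X i
      = ∑ i ∈ Finset.Icc (-(r : ℤ)) ((s : ℤ) - 1), X i + X (s : ℤ) := by
    have h : Finset.Icc (-(r : ℤ)) (s : ℤ)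
        = insert (s : ℤ) (Finset.Icc (-(r : ℤ)) ((s : ℤ) - 1)) := by
      ext x; simp only [Finset.mem_Icc, Finset.mem_insert]; omega
    rw [h, Finset.sum_insert (by simp only [Finset.mem_Icc]; omega)]
    ring
  have hbot : ∑ i ∈ Finset.Icc (-(r : ℤ)) (s : ℤ), Y i
      = Y (-(r : ℤ)) + ∑ i ∈ Finset.Icc (-(r : ℤ) + 1) (s : ℤ), Y i := by
    have h : Finset.Icc (-(r : ℤ)) (s : ℤ)
        = insert (-(r : ℤ)) (Finset.Icc (-(r : ℤ) + 1) (s : ℤ)) := by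
      ext x; simp only [Finset.mem_Icc, Finset.mem_insert]; omega
    rw [h, Finset.sum_insert (by simp only [Finset.mem_Icc]; omega)]
  have hXs : X (s : ℤ) = 0 := by
    simp only [hX, hvs, Nat.cast_one, hI]
    rw [Finset.Icc_self, Finset.sum_singleton, if_neg (by omega : ¬ (s : ℤ) < 0)]
    norm_num
  have hYr : Y (-(r : ℤ)) = 0 := by
    simp only [hY, hvr, Nat.cast_one, hI, hout_l]
    rw [Finset.Icc_self, Finset.sum_singleton, if_pos (by omega : -(r : ℤ) - 1 < 0)]
    norm_num
  have hpt : ∀ i ∈ Finset.Icc (-(r : ℤ)) (s : ℤ), X i - Y i + Z i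
      = -(((v (i - 1) : ℤ) - (v i : ℤ) + (if i = 0 then 1 else 0)) *
          ∑ j ∈ Finset.Icc 1 (v i), (L i j : ℤ)) := by
    intro i _
    simp only [hX, hY, hZ]
    rw [Finset.mul_sum, ← Finset.sum_neg_distrib, ← Finset.sum_sub_distrib,
      ← Finset.sum_add_distrib]
    refine Finset.sum_congr rfl fun j hj => ?_
    have hc : ((v i : ℤ) + I i - (j : ℤ))
        - ((j : ℤ) - 1 + I (i - 1) + (v (i - 1) : ℤ) - (v i : ℤ))
        + (2 * (j : ℤ) - 1 - (v i : ℤ))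
        = -((v (i - 1) : ℤ) - (v i : ℤ) + (if i = 0 then 1 else 0)) := by
      simp only [hI]
      split_ifs <;> omega
    linear_combination (L i j : ℤ) * hc
  have key : ∑ i ∈ Finset.Icc (-(r : ℤ)) (s : ℤ), (X i - Y i + Z i)
      = -∑ i ∈ Finset.Icc (-(r : ℤ)) (s : ℤ),
          ((v (i - 1) : ℤ) - (v i : ℤ) + (if i = 0 then 1 else 0)) *
            ∑ j ∈ Finset.Icc 1 (v i), (L i j : ℤ) := by
    rw [← Finset.sum_neg_distrib]
    exact Finset.sum_congr rfl hpt
  rw [Finset.sum_add_distrib, Finset.sum_sub_distrib] at key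
  linarith [htop, hbot, hshift, hXs, hYr, key]
end
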